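/- (Algebraic core of Theorem 3.1, redu_radical.) Let A and B be abelian groups. Assume that every additive endomorphism of B that factors through A is radical. If f is a bijective additive endomorphism of A × B whose block component f_AA is an automorphism of A, then the block component f_BB is an automorphism of B. -/

import Mathlib

/-- The block components of an additive endomorphism of `A × B`. -/
def blockAA {A B : Type*} [AddCommGroup A] [AddCommGroup B] (f : A × B →+ A × B) : A →+ A :=
  (AddMonoidHom.fst A B).comp (f.comp (AddMonoidHom.inl A B))

def blockBB {A B : Type*} [AddCommGroup A] [AddCommGroup B] (f : A × B →+ A × B) : B →+ B :=
  (AddMonoidHom.snd A B).comp (f.comp (AddMonoidHom.inr A B))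

/-- An endomorphism `e` of `B` is radical if `id + ψ ∘ e ∘ ϕ` is bijective
for all endomorphisms `ψ, ϕ` of `B`. -/
def IsRadicalEnd {B : Type*} [AddCommGroup B] (e : B →+ B) : Prop :=
  ∀ ψ φ : B →+ B, Function.Bijective (AddMonoidHom.id B + ψ.comp (e.comp φ))

/-- Algebraic core of Theorem 3.1 (`redu_radical`): if every additive endomorphism of `B`
factoring through `A` is radical, and `f` is a bijective additive endomorphism of `A × B`
whose block `f_AA` is an automorphism of `A`, then `f_BB` is an automorphism of `B`. -/
theorem blockBB_bijective_of_radical {A B : Type*} [AddCommGroup A] [AddCommGroup B]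
    (hrad : ∀ e : B →+ B, (∃ (u : B →+ A) (v : A →+ B), e = v.comp u) → IsRadicalEnd e)
    (f : A × B →+ A × B) (hf : Function.Bijective f)
    (hAA : Function.Bijective (blockAA f)) :
    Function.Bijective (blockBB f) := by
  set a := blockAA f with ha
  set d := blockBB f with hd
  set b : B →+ A := (AddMonoidHom.fst A B).comp (f.comp (AddMonoidHom.inr A B)) with hb
  set c : A →+ B := (AddMonoidHom.snd A B).comp (f.comp (AddMonoidHom.inl A B)) with hc
  let fE := AddEquiv.ofBijective f hf
  let g : A × B →+ A × B := fE.symm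
  have hgf : ∀ p : A × B, g (f p) = p := fun p => fE.symm_apply_apply p
  have hfg : ∀ p : A × B, f (g p) = p := fun p => fE.apply_symm_apply p
  let aE := AddEquiv.ofBijective a hAA
  let aInv : A →+ A := aE.symm
  have haInv1 : ∀ x, a (aInv x) = x := fun x => aE.apply_symm_apply x
  have haInv2 : ∀ x, aInv (a x) = x := fun x => aE.symm_apply_apply x
  have hfx : ∀ x : A, f (x, 0) = (a x, c x) := fun x => rfl
  have hfy : ∀ y : B, f (0, y) = (b y, d y) := fun y => rfl
  have hfsplit : ∀ x y, f (x, y) = (a x + b y, c x + d y) := by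
    intro x y
    have : (x, y) = ((x, 0) : A × B) + (0, y) := by simp
    rw [this, map_add, hfx, hfy, Prod.mk_add_mk]
  let e0 : B →+ B := c.comp (aInv.comp b)
  let s : B →+ B := d - e0
  have hs_apply : ∀ y, s y = d y - c (aInv (b y)) := fun y => rfl
  -- s is bijective, its inverse is y ↦ (g (0, y)).2
  have hsbij : Function.Bijective s := by
    refine Function.bijective_iff_has_inverse.mpr ⟨fun y => (g (0, y)).2, ?_, ?_⟩
    · -- left inverse : (g (0, s y)).2 = y
      intro y
      set t := aInv (b y) with ht
      have hat : a t = b y := haInv1 _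
      have h1 : g (b y, d y) = (0, y) := by rw [← hfy]; exact hgf _
      have h2 : g (b y, c t) = (t, 0) := by
        rw [← hat, ← hfx]; exact hgf _
      have h3 : ((0 : A), s y) = ((b y, d y) : A × B) - (b y, c t) := by
        simp [hs_apply, Prod.ext_iff, ht]
      have h4 : g (0, s y) = (0, y) - (t, 0) := by
        rw [h3, map_sub, h1, h2]
      show (g (0, s y)).2 = y
      rw [h4]
      simp
    · -- right inverse : s ((g (0,y)).2) = y
      intro y
      set p := g (0, y) with hp
      have hfp : f p = (0, y) := hfg _
      have hfp' : (a p.1 + b p.2, c p.1 + d p.2) = ((0 : A), y) := by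
        rw [← hfsplit]; exact hfp
      have h1 : a p.1 + b p.2 = 0 := congrArg Prod.fst hfp'
      have h2 : c p.1 + d p.2 = y := congrArg Prod.snd hfp'
      have hb2 : b p.2 = a (-p.1) := by
        rw [map_neg]; exact eq_neg_of_add_eq_zero_left (by rw [add_comm]; exact h1)
      have : aInv (b p.2) = -p.1 := by rw [hb2, haInv2]
      rw [hs_apply, this, map_neg, sub_neg_eq_add, add_comm]
      exact h2
  -- now d = s ∘ (id + s⁻¹ ∘ e0), and id + s⁻¹ ∘ e0 is bijective by radicality
  let sE := AddEquiv.ofBijective s hsbij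
  let sInv : B →+ B := sE.symm
  have hrad0 : IsRadicalEnd e0 := hrad e0 ⟨aInv.comp b, c, rfl⟩
  have hh : Function.Bijective (AddMonoidHom.id B + sInv.comp (e0.comp (AddMonoidHom.id B))) :=
    hrad0 sInv (AddMonoidHom.id B)
  have hss : ∀ z, s (sInv z) = z := fun z => sE.apply_symm_apply z
  have he0 : ∀ y, e0 y = c (aInv (b y)) := fun _ => rfl
  have hcomp : ⇑d = ⇑s ∘ ⇑(AddMonoidHom.id B + sInv.comp (e0.comp (AddMonoidHom.id B))) := by
    funext y
    have h1 : s (y + sInv (e0 y)) = s y + e0 y := by rw [map_add, hss]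
    have h2 : (⇑s ∘ ⇑(AddMonoidHom.id B + sInv.comp (e0.comp (AddMonoidHom.id B)))) y
        = s (y + sInv (e0 y)) := rfl
    rw [h2, h1, hs_apply, he0, sub_add_cancel]
  rw [show d = blockBB f from rfl] at hcomp ⊢
  rw [hcomp]
  exact hsbij.comp hh
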